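/- Every 1-balanced binary word is tangent analytic. -/

import Mathlib

/-- Helper for deleting one letter `c` from each maximal run of `c`s.
The flag is `true` when we are at the start of the word or just after a letter `≠ c`,
i.e. when the next occurrence of `c` starts a maximal run and must be deleted. -/
def delRunAux (c : Bool) : Bool → List Bool → List Bool
  | _, [] => []
  | del, a :: l =>
      if a = c then
        (if del then delRunAux c false l else a :: delRunAux c false l)
      else a :: delRunAux c true l

/-- Delete one letter `c` from each maximal run of `c`s in `w`. -/
def delRun (c : Bool) (w : List Bool) : List Bool := delRunAux c true w

/-- `Desub w v` : `v` is a desubstitution of the nonempty word `w`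
(letter `0` is `false`, letter `1` is `true`):
if `11` does not occur in `w` one may delete one `0` from each maximal run of `0`s,
and if `00` does not occur in `w` one may delete one `1` from each maximal run of `1`s. -/
def Desub (w v : List Bool) : Prop :=
  w ≠ [] ∧
    ((¬ [true, true] <:+: w ∧ v = delRun false w) ∨
     (¬ [false, false] <:+: w ∧ v = delRun true w))

/-- States of the three-state "diagonal" automaton. -/
inductive DiagState | Q | R | S
  deriving DecidableEq

/-- Transitions of the diagonal automaton:
Q→R on 0, R→Q on 1, R→S on 0, S→R on 1. -/
def diagStep : DiagState → Bool → Option DiagState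
  | .Q, false => some .R
  | .R, true  => some .Q
  | .R, false => some .S
  | .S, true  => some .R
  | _, _ => none

/-- States of the eight-state "non-oscillating diagonal" automaton. -/
inductive NOState | B | R | S | T | U | C | D | E
  deriving DecidableEq

/-- Transitions of the non-oscillating diagonal automaton:
B→R on 0, R→B on 1, R→S on 0, S→T on 1, T→S on 0, T→U on 1, U→E on 0, E→U on 1,
B→C on 1, C→D on 0, D→C on 1, D→E on 0. -/
def noStep : NOState → Bool → Option NOState
  | .B, false => some .R
  | .B, true  => some .C
  | .R, false => some .S
  | .R, true  => some .B
  | .S, true  => some .T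
  | .T, false => some .S
  | .T, true  => some .U
  | .U, false => some .E
  | .C, false => some .D
  | .D, false => some .E
  | .D, true  => some .C
  | .E, true  => some .U
  | _, _ => none

/-- The list of states visited when reading a word from state `q`
in a (partial deterministic) automaton, if the whole word can be read. -/
def autTraj {σ : Type} (step : σ → Bool → Option σ) : σ → List Bool → Option (List σ)
  | q, [] => some [q]
  | q, a :: l => (step q a).bind fun q' => (autTraj step q' l).map (q :: ·)

/-- A word is diagonal if it labels a path of the diagonal automaton
(all states are initial and accepting). -/
def Diagonal (w : List Bool) : Prop := ∃ q : DiagState, (autTraj diagStep q w).isSome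

/-- A word is non-oscillating diagonal if it labels a path of the non-oscillating
diagonal automaton (all states are initial and accepting). -/
def NonOscDiagonal (w : List Bool) : Prop := ∃ q : NOState, (autTraj noStep q w).isSome

/-- A word is tangent if some finite sequence of desubstitutions leads to a diagonal word. -/
def Tangent (w : List Bool) : Prop :=
  ∃ v, Relation.ReflTransGen Desub w v ∧ Diagonal v

/-- A word is tangent analytic if some finite sequence of desubstitutions leads to a
non-oscillating diagonal word. -/
def TangentAnalytic (w : List Bool) : Prop :=
  ∃ v, Relation.ReflTransGen Desub w v ∧ NonOscDiagonal v

/-- A word is `k`-balanced if any two factors of the same length have numbers of `1`s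
differing by at most `k`. -/
def BalancedWord (k : ℕ) (w : List Bool) : Prop :=
  ∀ u v : List Bool, u <:+: w → v <:+: w → u.length = v.length →
    |(u.count true : ℤ) - (v.count true : ℤ)| ≤ (k : ℤ)

/-- `pcount L n` is the complexity `p_n(L)`: the number of words of length `n` in `L`. -/
noncomputable def pcount (L : Set (List Bool)) (n : ℕ) : ℕ :=
  Set.ncard {w | w ∈ L ∧ w.length = n}

/-- The language `T^∞` of tangent words. -/
def Tinf : Set (List Bool) := {w | Tangent w}

/-- The language `T^ω` of tangent analytic words. -/
def Tomega : Set (List Bool) := {w | TangentAnalytic w}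

/-- A word `w ∈ L` is bispecial when `0w`, `1w`, `w0`, `w1` all belong to `L`. -/
def Bispecial (L : Set (List Bool)) (w : List Bool) : Prop :=
  w ∈ L ∧ (false :: w) ∈ L ∧ (true :: w) ∈ L ∧ (w ++ [false]) ∈ L ∧ (w ++ [true]) ∈ L

/-- The number of two-sided extensions `a·w·b` of `w` inside `L`. -/
noncomputable def extCount (L : Set (List Bool)) (w : List Bool) : ℕ :=
  Set.ncard {p : Bool × Bool | (p.1 :: (w ++ [p.2])) ∈ L}

/-- A weak bispecial word of `L`. -/
def WeakBispecial (L : Set (List Bool)) (w : List Bool) : Prop :=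
  Bispecial L w ∧ extCount L w = 2

/-- A strong bispecial word of `L`. -/
def StrongBispecial (L : Set (List Bool)) (w : List Bool) : Prop :=
  Bispecial L w ∧ extCount L w = 4

/-- `wb L n` : the number of weak bispecial words of length `n` in `L`. -/
noncomputable def wb (L : Set (List Bool)) (n : ℕ) : ℕ :=
  Set.ncard {w | WeakBispecial L w ∧ w.length = n}

/-- `sb L n` : the number of strong bispecial words of length `n` in `L`. -/
noncomputable def sb (L : Set (List Bool)) (n : ℕ) : ℕ :=
  Set.ncard {w | StrongBispecial L w ∧ w.length = n}

/-- A language is factorial if it is closed under taking factors. -/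
def FactorialLang (L : Set (List Bool)) : Prop :=
  ∀ w ∈ L, ∀ u : List Bool, u <:+: w → u ∈ L

/-- A language is extendable if every word extends on both sides within the language. -/
def ExtendableLang (L : Set (List Bool)) : Prop :=
  ∀ w ∈ L, (∃ a : Bool, (a :: w) ∈ L) ∧ (∃ b : Bool, (w ++ [b]) ∈ L)

section BTAProof

lemma A_nil (d : Bool) : delRunAux false d [] = [] := by cases d <;> rfl
lemma A_true (d : Bool) (l : List Bool) :
    delRunAux false d (true :: l) = true :: delRunAux false true l := rfl
lemma A_f_t (l : List Bool) :
    delRunAux false true (false :: l) = delRunAux false false l := rfl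
lemma A_f_f (l : List Bool) :
    delRunAux false false (false :: l) = false :: delRunAux false false l := rfl

def flagAfter (d : Bool) (l : List Bool) : Bool := l.getLast?.getD d

lemma flagAfter_nil (d : Bool) : flagAfter d [] = d := rfl

lemma gl_cons (a : Bool) {l : List Bool} (h : l ≠ []) :
    (a :: l).getLast? = l.getLast? := by
  cases l with
  | nil => exact absurd rfl h
  | cons b m => exact List.getLast?_cons_cons ..

lemma getLast?_cons_ne_none : ∀ (b : Bool) (m : List Bool), (b :: m).getLast? ≠ none := by
  intro b m
  induction m generalizing b with
  | nil => simp
  | cons c m' ih => rw [List.getLast?_cons_cons]; exact ih c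

lemma flagAfter_cons (d a : Bool) (l : List Bool) :
    flagAfter d (a :: l) = flagAfter a l := by
  cases l with
  | nil => rfl
  | cons b m =>
    show ((a :: b :: m).getLast?).getD d = ((b :: m).getLast?).getD a
    rw [List.getLast?_cons_cons]
    rcases h : (b :: m).getLast? with _ | c
    · exact absurd h (getLast?_cons_ne_none b m)
    · rfl

lemma A_ne_nil {d : Bool} {l p : List Bool} (h : delRunAux false d l = p) (hp : p ≠ []) :
    l ≠ [] := by
  rintro rfl
  exact hp h.symm

lemma splitR : ∀ (w : List Bool) (d : Bool) (p y : List Bool),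
    delRunAux false d w = p ++ y →
    ∃ w₁ w₂, w = w₁ ++ w₂ ∧ delRunAux false d w₁ = p ∧
      delRunAux false (flagAfter d w₁) w₂ = y ∧
      (p = [] → w₁ = []) ∧ (p ≠ [] → w₁.getLast? = p.getLast?) := by
  intro w
  induction w with
  | nil =>
    intro d p y h
    have h' : p ++ y = [] := by simpa [delRunAux] using h.symm
    rcases List.append_eq_nil_iff.mp h' with ⟨rfl, rfl⟩
    exact ⟨[], [], rfl, rfl, rfl, fun _ => rfl, fun h => absurd rfl h⟩
  | cons a l ih =>
    intro d p y h
    cases a with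
    | true =>
      rw [A_true] at h
      cases p with
      | nil =>
        refine ⟨[], true :: l, rfl, rfl, ?_, fun _ => rfl, fun hne => absurd rfl hne⟩
        simpa [flagAfter_nil, A_true] using h
      | cons b p' =>
        have hb : b = true := by
          have := congrArg List.head? h; simpa using this.symm
        subst hb
        have h' : delRunAux false true l = p' ++ y := by
          have := congrArg List.tail h; simpa using this
        obtain ⟨l₁, l₂, hl, h1, h2, h3, h4⟩ := ih true p' y h'
        refine ⟨true :: l₁, l₂, by simp [hl], by rw [A_true, h1], ?_, ?_, ?_⟩
        · rwa [flagAfter_cons]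
        · intro hc; simp at hc
        · intro _
          by_cases hp' : p' = []
          · subst hp'
            rw [h3 rfl]
          · have hl₁ : l₁ ≠ [] := A_ne_nil h1 hp'
            rw [gl_cons _ hl₁, gl_cons _ hp', h4 hp']
    | false =>
      cases d with
      | true =>
        rw [A_f_t] at h
        cases p with
        | nil =>
          refine ⟨[], false :: l, rfl, rfl, ?_, fun _ => rfl, fun hne => absurd rfl hne⟩
          rw [flagAfter_nil, A_f_t]
          exact h
        | cons b p' =>
          obtain ⟨l₁, l₂, hl, h1, h2, h3, h4⟩ := ih false (b :: p') y h
          have hl₁ : l₁ ≠ [] := A_ne_nil h1 (by simp)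
          refine ⟨false :: l₁, l₂, by simp [hl], by rw [A_f_t, h1], ?_, ?_, ?_⟩
          · rwa [flagAfter_cons]
          · intro hc; simp at hc
          · intro _
            rw [gl_cons _ hl₁]
            exact h4 (by simp)
      | false =>
        rw [A_f_f] at h
        cases p with
        | nil =>
          refine ⟨[], false :: l, rfl, rfl, ?_, fun _ => rfl, fun hne => absurd rfl hne⟩
          rw [flagAfter_nil, A_f_f]
          simpa using h
        | cons b p' =>
          have hb : b = false := by
            have := congrArg List.head? h; simpa using this.symm
          subst hb
          have h' : delRunAux false false l = p' ++ y := by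
            have := congrArg List.tail h; simpa using this
          obtain ⟨l₁, l₂, hl, h1, h2, h3, h4⟩ := ih false p' y h'
          refine ⟨false :: l₁, l₂, by simp [hl], by rw [A_f_f, h1], ?_, ?_, ?_⟩
          · rwa [flagAfter_cons]
          · intro hc; simp at hc
          · intro _
            by_cases hp' : p' = []
            · subst hp'
              rw [h3 rfl]
            · have hl₁ : l₁ ≠ [] := A_ne_nil h1 hp'
              rw [gl_cons _ hl₁, gl_cons _ hp', h4 hp']

lemma notII_tail {a : Bool} {l : List Bool} (h : ¬ [true, true] <:+: (a :: l)) :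
    ¬ [true, true] <:+: l :=
  fun hc => h (hc.trans (List.suffix_cons a l).isInfix)

lemma ones_A : ∀ (l : List Bool) (d : Bool),
    (delRunAux false d l).count true = l.count true := by
  intro l
  induction l with
  | nil => intro d; rfl
  | cons a l ih =>
    intro d
    cases a with
    | true => rw [A_true]; simp [List.count_cons, ih]
    | false =>
      cases d with
      | true => rw [A_f_t]; simp [List.count_cons, ih]
      | false => rw [A_f_f]; simp [List.count_cons, ih]

lemma len_A : ∀ (l : List Bool) (d : Bool), ¬ [true, true] <:+: l →
    (delRunAux false d l).length + l.count true
      + (if d = true ∧ l.head? = some false then 1 else 0)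
    = l.length + (if l.getLast? = some true then 1 else 0) := by
  intro l
  induction l with
  | nil => intro d _; simp [delRunAux]
  | cons a l ih =>
    intro d hII
    have hII' := notII_tail hII
    cases l with
    | nil =>
      cases a <;> cases d <;> simp [delRunAux, List.count_cons]
    | cons b l' =>
      have key := ih a hII'
      have hgl := gl_cons a (l := b :: l') (by simp)
      cases a with
      | true =>
        have hb : b = false := by
          cases b
          · rfl
          · exact absurd ⟨[], l', rfl⟩ hII
        subst hb
        rw [A_true, hgl]
        simp only [List.head?_cons, List.length_cons, List.count_cons] at key ⊢
        split_ifs at key ⊢ <;> simp_all <;> omega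
      | false =>
        rw [hgl]
        cases d with
        | true =>
          rw [A_f_t]
          simp only [List.head?_cons, List.length_cons, List.count_cons] at key ⊢
          split_ifs at key ⊢ <;> simp_all <;> omega
        | false =>
          rw [A_f_f]
          simp only [List.head?_cons, List.length_cons, List.count_cons] at key ⊢
          split_ifs at key ⊢ <;> simp_all <;> omega

lemma head_A {v x : List Bool} {d : Bool} (h : delRunAux false d v = x)
    (hx : x.head? = some false) : v.head? = some false := by
  cases v with
  | nil => rw [A_nil] at h; subst h; simp at hx
  | cons a l =>
    cases a with
    | true => rw [A_true] at h; subst h; simp at hx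
    | false => rfl

lemma exists_concat_of_getLast? : ∀ (l : List Bool) (a : Bool),
    l.getLast? = some a → ∃ l', l = l' ++ [a] := by
  intro l
  induction l with
  | nil => intro a h; simp at h
  | cons b m ih =>
    intro a h
    cases m with
    | nil =>
      simp at h
      exact ⟨[], by simp [h]⟩
    | cons c m' =>
      rw [List.getLast?_cons_cons] at h
      obtain ⟨l', hl'⟩ := ih a h
      exact ⟨b :: l', by rw [hl']; rfl⟩

lemma claim1 (w t : List Bool) (hw : ¬ [true, true] <:+: w)
    (h : (true :: (t ++ [true])) <:+: delRunAux false true w) :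
    ∃ y, y <:+: w ∧ y.length = t.length + t.count true + 3 ∧
      y.count true = t.count true + 2 := by
  obtain ⟨p, q, hpq⟩ := h
  have h1 : delRunAux false true w = p ++ ((true :: (t ++ [true])) ++ q) := by
    rw [← hpq]; simp [List.append_assoc]
  obtain ⟨w₁, r, hw1, hp, hr, -, -⟩ := splitR w true p _ h1
  obtain ⟨v, w₃, hrv, hx, -, -, hlast⟩ :=
    splitR r (flagAfter true w₁) (true :: (t ++ [true])) q hr
  have hvw : v <:+: w := ⟨w₁, w₃, by rw [hw1, hrv]; simp [List.append_assoc]⟩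
  have hvII : ¬ [true, true] <:+: v := fun hc => hw (hc.trans hvw)
  have hgl : v.getLast? = some true := by
    rw [hlast (by simp)]
    rw [show true :: (t ++ [true]) = (true :: t) ++ [true] by simp, List.getLast?_concat]
  have hones : v.count true = t.count true + 2 := by
    have h2 := ones_A v (flagAfter true w₁)
    rw [hx] at h2
    simp [List.count_cons, List.count_append] at h2
    omega
  have hlen := len_A v (flagAfter true w₁) hvII
  rw [hx] at hlen
  rw [if_pos hgl] at hlen
  simp only [List.length_cons, List.length_append, List.length_nil] at hlen
  by_cases hs : flagAfter true w₁ = true ∧ v.head? = some false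
  · obtain ⟨a, v', rfl⟩ : ∃ a v', v = a :: v' := by
      cases v with
      | nil => simp at hgl
      | cons a v' => exact ⟨a, v', rfl⟩
    have ha : a = false := by simpa using hs.2
    subst ha
    rw [if_pos hs] at hlen
    have hc' : v'.count true = t.count true + 2 := by
      simpa [List.count_cons] using hones
    refine ⟨v', List.IsInfix.trans ⟨[false], [], by simp⟩ hvw, ?_, hc'⟩
    simp only [List.length_cons] at hlen
    omega
  · rw [if_neg hs] at hlen
    exact ⟨v, hvw, by omega, hones⟩

lemma claim2 (w t : List Bool) (hw : ¬ [true, true] <:+: w)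
    (h : (false :: (t ++ [false])) <:+: delRunAux false true w) :
    ∃ y, y <:+: w ∧ y.length = t.length + t.count true + 3 ∧
      y.count true ≤ t.count true := by
  obtain ⟨p, q, hpq⟩ := h
  have h1 : delRunAux false true w = p ++ ((false :: (t ++ [false])) ++ q) := by
    rw [← hpq]; simp [List.append_assoc]
  obtain ⟨w₁, r, hw1, hp, hr, -, -⟩ := splitR w true p _ h1
  obtain ⟨v, w₃, hrv, hx, -, -, hlast⟩ :=
    splitR r (flagAfter true w₁) (false :: (t ++ [false])) q hr
  have hvw : v <:+: w := ⟨w₁, w₃, by rw [hw1, hrv]; simp [List.append_assoc]⟩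
  have hvII : ¬ [true, true] <:+: v := fun hc => hw (hc.trans hvw)
  have hgl : v.getLast? = some false := by
    rw [hlast (by simp)]
    rw [show false :: (t ++ [false]) = (false :: t) ++ [false] by simp, List.getLast?_concat]
  have hones : v.count true = t.count true := by
    have h2 := ones_A v (flagAfter true w₁)
    rw [hx] at h2
    simp [List.count_cons, List.count_append] at h2
    omega
  have hlen := len_A v (flagAfter true w₁) hvII
  rw [hx] at hlen
  rw [if_neg (show ¬ v.getLast? = some true by rw [hgl]; simp)] at hlen
  simp only [List.length_cons, List.length_append, List.length_nil] at hlen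
  cases hd : flagAfter true w₁ with
  | true =>
    have hhead : v.head? = some false := head_A hx (by simp)
    rw [if_pos ⟨hd, hhead⟩] at hlen
    exact ⟨v, hvw, by omega, le_of_eq hones⟩
  | false =>
    rw [if_neg (by simp [hd])] at hlen
    have hw1l : w₁.getLast? = some false := by
      unfold flagAfter at hd
      cases hgl1 : w₁.getLast? with
      | none => rw [hgl1] at hd; simp at hd
      | some c => rw [hgl1] at hd; simp at hd; rw [hd]
    obtain ⟨w₁', hw₁'⟩ := exists_concat_of_getLast? w₁ false hw1l
    refine ⟨false :: v, ⟨w₁', w₃, ?_⟩, ?_, ?_⟩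
    · rw [hw1, hrv, hw₁']; simp [List.append_assoc]
    · simp only [List.length_cons]; omega
    · simp [List.count_cons, hones]

lemma firstDiff : ∀ (s r : List Bool), s ≠ r → s.length = r.length →
    ∃ p α β s₂ r₂, α ≠ β ∧ s = p ++ α :: s₂ ∧ r = p ++ β :: r₂ := by
  intro s
  induction s with
  | nil =>
    intro r h hl
    have : r = [] := by simpa using hl.symm
    exact absurd this.symm h
  | cons a s' ih =>
    intro r h hl
    cases r with
    | nil => simp at hl
    | cons b r' =>
      by_cases hab : a = b
      · subst hab
        have h' : s' ≠ r' := fun e => h (by rw [e])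
        obtain ⟨p, α, β, s₂, r₂, hab, hs, hr⟩ := ih r' h' (by simpa using hl)
        exact ⟨a :: p, α, β, s₂, r₂, hab, by simp [hs], by simp [hr]⟩
      · exact ⟨[], a, b, s', r', hab, rfl, rfl⟩

lemma loth_aux : ∀ (n : ℕ) (x u v : List Bool), u <:+: x → v <:+: x →
    u.length = v.length → u.length ≤ n → v.count true + 2 ≤ u.count true →
    ∃ t, (false :: (t ++ [false])) <:+: x ∧ (true :: (t ++ [true])) <:+: x := by
  intro n
  induction n with
  | zero =>
    intro x u v hu hv hl hn hc
    have : u = [] := List.length_eq_zero_iff.mp (Nat.le_zero.mp hn)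
    subst this
    simp at hc
  | succ n ih =>
    intro x u v hu hv hl hn hc
    have hcu : u.count true ≤ u.length := List.count_le_length
    have hlu : 2 ≤ u.length := by omega
    obtain ⟨a, u', rfl⟩ : ∃ a u', u = a :: u' := by
      cases u with
      | nil => simp at hlu
      | cons a u' => exact ⟨a, u', rfl⟩
    obtain ⟨b, v', rfl⟩ : ∃ b v', v = b :: v' := by
      cases v with
      | nil => simp at hl
      | cons b v' => exact ⟨b, v', rfl⟩
    have hu' : u' <:+: x := List.IsInfix.trans ⟨[a], [], by simp⟩ hu
    have hv' : v' <:+: x := List.IsInfix.trans ⟨[b], [], by simp⟩ hv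
    have hl' : u'.length = v'.length := by simpa using hl
    have hn' : u'.length ≤ n := by
      have := hn
      simp only [List.length_cons] at this
      omega
    by_cases h1 : v'.count true + 2 ≤ u'.count true
    · exact ih x u' v' hu' hv' hl' hn' h1
    have hab : a = true ∧ b = false := by
      cases a <;> cases b
      · exfalso; simp [List.count_cons] at hc; omega
      · exfalso; simp [List.count_cons] at hc; omega
      · exact ⟨rfl, rfl⟩
      · exfalso; simp [List.count_cons] at hc; omega
    obtain ⟨rfl, rfl⟩ := hab
    have hc' : v'.count true + 1 ≤ u'.count true := by
      simp [List.count_cons] at hc; omega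
    -- rear decomposition of u' and v'
    obtain ⟨s, a', rfl⟩ : ∃ s a', u' = s ++ [a'] := by
      rcases List.eq_nil_or_concat u' with h | ⟨s, a', h⟩
      · exfalso; subst h; simp at hlu
      · exact ⟨s, a', by rw [h, List.concat_eq_append]⟩
    obtain ⟨r, b', rfl⟩ : ∃ r b', v' = r ++ [b'] := by
      rcases List.eq_nil_or_concat v' with h | ⟨r, b', h⟩
      · exfalso; subst h; simp at hl'
      · exact ⟨r, b', by rw [h, List.concat_eq_append]⟩
    have hts : (true :: s) <:+: x := List.IsInfix.trans ⟨[], [a'], by simp⟩ hu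
    have hfr : (false :: r) <:+: x := List.IsInfix.trans ⟨[], [b'], by simp⟩ hv
    have hlsr : s.length = r.length := by simp at hl'; omega
    by_cases h2 : (false :: r).count true + 2 ≤ (true :: s).count true
    · refine ih x (true :: s) (false :: r) hts hfr (by simp [hlsr]) ?_ h2
      simp only [List.length_cons]
      simp only [List.length_cons, List.length_append, List.length_nil] at hn
      omega
    have hab' : a' = true ∧ b' = false := by
      cases a' <;> cases b'
      · exfalso; simp [List.count_cons, List.count_append] at hc h2; omega
      · exfalso; simp [List.count_cons, List.count_append] at hc h2; omega
      · exact ⟨rfl, rfl⟩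
      · exfalso; simp [List.count_cons, List.count_append] at hc h2; omega
    obtain ⟨rfl, rfl⟩ := hab'
    have hcnt : s.count true = r.count true := by
      simp [List.count_cons, List.count_append] at hc h2
      omega
    by_cases hsr : s = r
    · subst hsr
      exact ⟨s, hv, hu⟩
    · obtain ⟨p, α, β, s₂, r₂, hαβ, hs, hr⟩ := firstDiff s r hsr hlsr
      cases α with
      | true =>
        have hβ : β = false := by cases β with | false => rfl | true => exact absurd rfl hαβ
        subst hβ hs hr
        refine ⟨p, ?_, ?_⟩
        · exact List.IsInfix.trans ⟨[], r₂ ++ [false], by simp⟩ hv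
        · exact List.IsInfix.trans ⟨[], s₂ ++ [true], by simp⟩ hu
      | false =>
        have hβ : β = true := by cases β with | false => exact absurd rfl hαβ | true => rfl
        subst hβ hs hr
        have hs2 : (s₂ ++ [true]) <:+: x :=
          List.IsInfix.trans ⟨true :: p ++ [false], [], by simp⟩ hu
        have hr2 : (r₂ ++ [false]) <:+: x :=
          List.IsInfix.trans ⟨false :: p ++ [true], [], by simp⟩ hv
        have hl2 : (s₂ ++ [true]).length = (r₂ ++ [false]).length := by
          simp only [List.length_append, List.length_cons, List.length_nil] at hlsr ⊢
          omega
        have hn2 : (s₂ ++ [true]).length ≤ n := by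
          simp only [List.length_append, List.length_cons, List.length_nil] at hn ⊢
          omega
        refine ih x (s₂ ++ [true]) (r₂ ++ [false]) hs2 hr2 hl2 hn2 ?_
        simp only [List.count_append, List.count_cons, List.count_nil] at hcnt ⊢
        simp at hcnt ⊢
        omega

lemma loth (x : List Bool) (h : ¬ BalancedWord 1 x) :
    ∃ t, (false :: (t ++ [false])) <:+: x ∧ (true :: (t ++ [true])) <:+: x := by
  unfold BalancedWord at h
  push_neg at h
  obtain ⟨u, v, hu, hv, hl, hgt⟩ := h
  rcases abs_cases ((u.count true : ℤ) - (v.count true : ℤ)) with ⟨he, -⟩ | ⟨he, -⟩ <;>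
    rw [he] at hgt
  · exact loth_aux u.length x u v hu hv hl le_rfl (by push_cast at hgt; omega)
  · exact loth_aux v.length x v u hv hu hl.symm le_rfl (by push_cast at hgt; omega)

lemma balC (w : List Bool) (hb : BalancedWord 1 w) (h11 : ¬ [true, true] <:+: w) :
    BalancedWord 1 (delRunAux false true w) := by
  by_contra hnb
  obtain ⟨t, h0, h1⟩ := loth _ hnb
  obtain ⟨y1, hy1, hl1, hc1⟩ := claim1 w t h11 h1
  obtain ⟨y0, hy0, hl0, hc0⟩ := claim2 w t h11 h0
  have := hb y1 y0 hy1 hy0 (hl1.trans hl0.symm)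
  rw [abs_le] at this
  obtain ⟨-, h2⟩ := this
  rw [hc1] at h2
  push_cast at h2
  omega

-- negation conjugation
lemma delRun_not : ∀ (l : List Bool) (d : Bool),
    delRunAux true d (l.map not) = (delRunAux false d l).map not := by
  intro l
  induction l with
  | nil => intro d; cases d <;> rfl
  | cons a l ih =>
    intro d
    cases a with
    | true =>
      cases d <;> simp only [List.map_cons, Bool.not_true, A_true, delRunAux,
        if_pos rfl, if_neg (by simp : ¬ false = true)] <;> rw [ih] <;> rfl
    | false =>
      cases d <;> simp only [List.map_cons, Bool.not_false, A_f_t, A_f_f, delRunAux,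
        if_pos rfl, if_neg (by simp : ¬ false = true)] <;> rw [ih] <;> rfl

lemma infix_not {u w : List Bool} (h : u <:+: w) : u.map not <:+: w.map not := by
  obtain ⟨s, t, rfl⟩ := h
  exact ⟨s.map not, t.map not, by simp⟩

lemma map_not_not : ∀ l : List Bool, (l.map not).map not = l := by
  intro l
  induction l with
  | nil => rfl
  | cons a l ih => cases a <;> simp [ih]

lemma count_not (l : List Bool) : (l.map not).count true + l.count true = l.length := by
  induction l with
  | nil => rfl
  | cons a l ih => cases a <;> simp [List.count_cons] <;> omega

lemma bal_not (w : List Bool) (h : BalancedWord 1 w) : BalancedWord 1 (w.map not) := by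
  intro u v hu hv hl
  have hu' : u.map not <:+: w := by
    have := infix_not hu; rwa [map_not_not] at this
  have hv' : v.map not <:+: w := by
    have := infix_not hv; rwa [map_not_not] at this
  have key := h (u.map not) (v.map not) hu' hv' (by simp [hl])
  have e1 := count_not u
  have e2 := count_not v
  rw [abs_le] at key ⊢
  constructor <;> push_cast at key ⊢ <;> omega


lemma lenA_le : ∀ (l : List Bool) (d : Bool), (delRunAux false d l).length ≤ l.length := by
  intro l
  induction l with
  | nil => intro d; rw [A_nil]
  | cons a l ih =>
    intro d
    cases a with
    | true => rw [A_true]; simpa using ih true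
    | false =>
      cases d with
      | true => rw [A_f_t]; exact le_trans (ih false) (by simp)
      | false => rw [A_f_f]; simpa using ih false

lemma lenA_lt : ∀ (l : List Bool), false ∈ l → (delRunAux false true l).length < l.length := by
  intro l
  induction l with
  | nil => intro h; simp at h
  | cons a l ih =>
    intro h
    cases a with
    | true =>
      have hf : false ∈ l := by simpa using h
      rw [A_true]
      simpa using ih hf
    | false =>
      rw [A_f_t]
      calc (delRunAux false false l).length ≤ l.length := lenA_le l false
        _ < (false :: l).length := by simp

lemma dich (w : List Bool) (hb : BalancedWord 1 w) :
    ¬ [true, true] <:+: w ∨ ¬ [false, false] <:+: w := by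
  by_contra hcon
  push_neg at hcon
  have := hb [true, true] [false, false] hcon.1 hcon.2 rfl
  norm_num at this

lemma small (w : List Bool) (h11 : ¬ [true, true] <:+: w) (hf : false ∉ w) :
    w = [] ∨ w = [true] := by
  cases w with
  | nil => exact Or.inl rfl
  | cons a w' =>
    cases a with
    | false => exact absurd (by simp) hf
    | true =>
      cases w' with
      | nil => exact Or.inr rfl
      | cons b w'' =>
        cases b with
        | false => exact absurd (by simp) hf
        | true => exact absurd ⟨[], w'', rfl⟩ h11

lemma no_nil : NonOscDiagonal [] := ⟨NOState.B, rfl⟩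

lemma no_single (a : Bool) : NonOscDiagonal [a] := ⟨NOState.B, by cases a <;> rfl⟩

lemma ta_base (w : List Bool) (h : w = [] ∨ w = [true] ∨ w = [false]) :
    TangentAnalytic w := by
  rcases h with rfl | rfl | rfl
  · exact ⟨[], Relation.ReflTransGen.refl, no_nil⟩
  · exact ⟨[true], Relation.ReflTransGen.refl, no_single true⟩
  · exact ⟨[false], Relation.ReflTransGen.refl, no_single false⟩

lemma main_aux : ∀ (n : ℕ) (w : List Bool), w.length ≤ n → BalancedWord 1 w →
    TangentAnalytic w := by
  intro n
  induction n with
  | zero =>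
    intro w hl _
    have : w = [] := List.length_eq_zero_iff.mp (Nat.le_zero.mp hl)
    exact ta_base w (Or.inl this)
  | succ n ih =>
    intro w hl hb
    rcases dich w hb with h11 | h00
    · by_cases hf : false ∈ w
      · have hlt := lenA_lt w hf
        obtain ⟨z, hz, hno⟩ := ih (delRunAux false true w) (by omega) (balC w hb h11)
        have hne : w ≠ [] := by rintro rfl; simp at hf
        exact ⟨z, Relation.ReflTransGen.head ⟨hne, Or.inl ⟨h11, rfl⟩⟩ hz, hno⟩
      · rcases small w h11 hf with rfl | rfl
        · exact ta_base _ (Or.inl rfl)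
        · exact ta_base _ (Or.inr (Or.inl rfl))
    · have h11' : ¬ [true, true] <:+: w.map not := by
        intro hc
        apply h00
        have h2 := infix_not hc
        rw [map_not_not] at h2
        simpa using h2
      by_cases hf : false ∈ w.map not
      · have hb' := bal_not w hb
        have hlt := lenA_lt (w.map not) hf
        have hconj : delRunAux true true w = (delRunAux false true (w.map not)).map not := by
          have h3 := delRun_not (w.map not) true
          rwa [map_not_not] at h3
        have hbal2 : BalancedWord 1 (delRunAux true true w) := by
          rw [hconj]
          exact bal_not _ (balC (w.map not) hb' h11')
        have hlen2 : (delRunAux true true w).length ≤ n := by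
          rw [hconj, List.length_map]
          rw [List.length_map] at hlt
          omega
        obtain ⟨z, hz, hno⟩ := ih (delRunAux true true w) hlen2 hbal2
        have hne : w ≠ [] := by rintro rfl; simp at hf
        exact ⟨z, Relation.ReflTransGen.head ⟨hne, Or.inr ⟨h00, rfl⟩⟩ hz, hno⟩
      · rcases small (w.map not) h11' hf with hw | hw
        · have : w = [] := by
            have := congrArg (List.map not) hw
            rwa [map_not_not] at this
          exact ta_base w (Or.inl this)
        · have : w = [false] := by
            have := congrArg (List.map not) hw
            rwa [map_not_not] at this
          exact ta_base w (Or.inr (Or.inr this))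


end BTAProof

/-- every 1-balanced word is tangent analytic. -/
theorem balanced_tangent_analytic (w : List Bool) (h : BalancedWord 1 w) :
    TangentAnalytic w :=
  main_aux w.length w le_rfl h
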